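/- Let b ≠ 0, C₁, C₂ be real numbers, and define φ(η) = 2b/(b²(η + C₂)² − C₁). Then at every η with b²(η + C₂)² − C₁ ≠ 0, φ satisfies φ·φ'' − 2(φ')² + bφ³ = 0. -/

import Mathlib

section aux

variable (b C₁ C₂ : ℝ)

private lemma hasDerivD (η : ℝ) :
    HasDerivAt (fun η => b ^ 2 * (η + C₂) ^ 2 - C₁) (b ^ 2 * (2 * (η + C₂))) η := by
  have h1 : HasDerivAt (fun η : ℝ => η + C₂) 1 η :=
    (hasDerivAt_id η).add_const C₂
  have h2 : HasDerivAt (fun η : ℝ => (η + C₂) ^ 2) (2 * (η + C₂) ^ 1 * 1) η := h1.pow 2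
  have h3 := (h2.const_mul (b ^ 2)).sub_const C₁
  exact h3.congr_deriv (by ring)

private lemma hasDerivPhi (η : ℝ) (hη : b ^ 2 * (η + C₂) ^ 2 - C₁ ≠ 0) :
    HasDerivAt (fun η => 2 * b / (b ^ 2 * (η + C₂) ^ 2 - C₁))
      (-(4 * b ^ 3 * (η + C₂)) / (b ^ 2 * (η + C₂) ^ 2 - C₁) ^ 2) η := by
  have h := (hasDerivAt_const η (2 * b)).fun_div (hasDerivD b C₁ C₂ η) hη
  refine h.congr_deriv ?_; field_simp; ring

private lemma derivPhi (η : ℝ) (hη : b ^ 2 * (η + C₂) ^ 2 - C₁ ≠ 0) :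
    deriv (fun η => 2 * b / (b ^ 2 * (η + C₂) ^ 2 - C₁)) η
      = -(4 * b ^ 3 * (η + C₂)) / (b ^ 2 * (η + C₂) ^ 2 - C₁) ^ 2 :=
  (hasDerivPhi b C₁ C₂ η hη).deriv

end aux

/-- `φ = 2b/(b²(η+C₂)² − C₁)` solves the case `a = 2, n = 2`. -/
theorem stmt_6 (b C₁ C₂ : ℝ) (hb : b ≠ 0) :
    ∀ η : ℝ, b ^ 2 * (η + C₂) ^ 2 - C₁ ≠ 0 →
      (fun η => 2 * b / (b ^ 2 * (η + C₂) ^ 2 - C₁)) η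
          * deriv (deriv (fun η => 2 * b / (b ^ 2 * (η + C₂) ^ 2 - C₁))) η
        - 2 * (deriv (fun η => 2 * b / (b ^ 2 * (η + C₂) ^ 2 - C₁)) η) ^ 2
        + b * ((fun η => 2 * b / (b ^ 2 * (η + C₂) ^ 2 - C₁)) η) ^ 3 = 0 := by
  intro η hη
  set D : ℝ → ℝ := fun η => b ^ 2 * (η + C₂) ^ 2 - C₁ with hDdef
  -- the set where D ≠ 0 is open, so eventually D ≠ 0 near η
  have hcont : Continuous D := by fun_prop
  have hopen : IsOpen {x : ℝ | D x ≠ 0} := hcont.isOpen_preimage {0}ᶜ isOpen_compl_singleton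
  have hev : ∀ᶠ x in nhds η, D x ≠ 0 := hopen.mem_nhds hη
  have hev2 : deriv (fun η => 2 * b / (b ^ 2 * (η + C₂) ^ 2 - C₁))
      =ᶠ[nhds η] fun x => -(4 * b ^ 3 * (x + C₂)) / (b ^ 2 * (x + C₂) ^ 2 - C₁) ^ 2 := by
    filter_upwards [hev] with x hx
    exact derivPhi b C₁ C₂ x hx
  have hd2 : deriv (deriv (fun η => 2 * b / (b ^ 2 * (η + C₂) ^ 2 - C₁))) η
      = deriv (fun x => -(4 * b ^ 3 * (x + C₂)) / (b ^ 2 * (x + C₂) ^ 2 - C₁) ^ 2) η :=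
    hev2.deriv_eq
  have hD2 : (b ^ 2 * (η + C₂) ^ 2 - C₁) ^ 2 ≠ 0 := pow_ne_zero _ hη
  have hnum : HasDerivAt (fun x : ℝ => -(4 * b ^ 3 * (x + C₂))) (-(4 * b ^ 3)) η := by
    have := ((hasDerivAt_id η).add_const C₂).const_mul (4 * b ^ 3)
    exact this.neg.congr_deriv (by ring)
  have hden : HasDerivAt (fun x : ℝ => (b ^ 2 * (x + C₂) ^ 2 - C₁) ^ 2)
      (2 * (b ^ 2 * (η + C₂) ^ 2 - C₁) ^ 1 * (b ^ 2 * (2 * (η + C₂)))) η :=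
    (hasDerivD b C₁ C₂ η).pow 2
  have h2 := hnum.fun_div hden hD2
  rw [hd2, h2.deriv, derivPhi b C₁ C₂ η hη]
  simp only
  field_simp
  ring
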